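/- Let c ∈ (0,1) and n = 2^{cm} with 1 ≤ n ≤ 2^{m-1} - 1. Then g(n,m) ≤ (n/c)·(6 - 3.2·log_2(c)). -/

import Mathlib

open Finset

/-- `f` assigns each component (indexed by `ι`) to one of `n` classes so that the
components in each class are pairwise disjoint with union `[m]`: every `x ∈ [m]`
lies in exactly one component of each class. -/
def IsResolution {ι : Type*} {m n : ℕ} (C : ι → Finset (Fin m)) (f : ι → Fin n) : Prop :=
  ∀ (i : Fin n) (x : Fin m), ∃! j : ι, f j = i ∧ x ∈ C j

/-- The multiset of nonempty subsets of `[m]` given by `C` is uniquely resolvable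
into `n` classes: a resolution exists and is unique up to renaming the classes. -/
def UniquelyResolvable {ι : Type*} {m : ℕ} (n : ℕ) (C : ι → Finset (Fin m)) : Prop :=
  (∀ j, (C j).Nonempty) ∧ ∃ f : ι → Fin n, IsResolution C f ∧
    ∀ f' : ι → Fin n, IsResolution C f' → ∃ σ : Equiv.Perm (Fin n), f' = σ ∘ f

/-- `g n m` : maximum size of a multiset of nonempty subsets of `[m]` that is
uniquely resolvable into `n` classes. -/
noncomputable def g (n m : ℕ) : ℕ :=
  sSup {k | ∃ C : Fin k → Finset (Fin m), UniquelyResolvable n C}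

/-- `P k m` : the largest `N` such that there is a multiset of nonempty subsets of `[m]`
uniquely resolvable into `N` classes in which every class has size exactly `k`. -/
noncomputable def P (k m : ℕ) : ℕ :=
  sSup {N | ∃ C : Fin N × Fin k → Finset (Fin m),
    UniquelyResolvable N C ∧ IsResolution C Prod.fst}

/-- The binary entropy function. -/
noncomputable def H2 (x : ℝ) : ℝ := -x * Real.logb 2 x - (1 - x) * Real.logb 2 (1 - x)

-- auxiliary lemmas
-- within-class: two components of the same class meeting a common point coincide
lemma same_class_eq {ι : Type*} {m n : ℕ} {C : ι → Finset (Fin m)} {f : ι → Fin n}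
    (hf : IsResolution C f) {j j' : ι} (hfe : f j = f j') {x : Fin m}
    (hx : x ∈ C j) (hx' : x ∈ C j') : j = j' := by
  obtain ⟨t, _, hu⟩ := hf (f j) x
  rw [hu j ⟨rfl, hx⟩, hu j' ⟨hfe.symm, hx'⟩]

lemma swap_res {ι : Type*} [DecidableEq ι] {m n : ℕ} {C : ι → Finset (Fin m)} {f : ι → Fin n}
    (hf : IsResolution C f) {j j' : ι} (hC : C j = C j') :
    IsResolution C (f ∘ Equiv.swap j j') := by
  have hCs : ∀ t, C (Equiv.swap j j' t) = C t := by
    intro t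
    rcases eq_or_ne t j with rfl | h1
    · rw [Equiv.swap_apply_left, hC]
    rcases eq_or_ne t j' with rfl | h2
    · rw [Equiv.swap_apply_right, hC]
    · rw [Equiv.swap_apply_of_ne_of_ne h1 h2]
  intro i x
  obtain ⟨s, ⟨hs1, hs2⟩, hu⟩ := hf i x
  refine ⟨Equiv.swap j j' s, ⟨?_, ?_⟩, ?_⟩
  · simp only [Function.comp_apply, Equiv.swap_apply_self, hs1]
  · rw [hCs]; exact hs2
  · intro t ⟨ht1, ht2⟩
    have : Equiv.swap j j' t = s := hu _ ⟨ht1, by rw [hCs]; exact ht2⟩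
    rw [← this, Equiv.swap_apply_self]

-- cross-class: distinct classes share no common non-full component
lemma cross_class {ι : Type*} [DecidableEq ι] {m n : ℕ} {C : ι → Finset (Fin m)}
    {f : ι → Fin n} (hf : IsResolution C f)
    (hu : ∀ f' : ι → Fin n, IsResolution C f' → ∃ σ : Equiv.Perm (Fin n), f' = σ ∘ f)
    {j j' : ι} (hC : C j = C j') (hne : f j ≠ f j') {x : Fin m} (hx : x ∉ C j) : False := by
  obtain ⟨σ, hσ⟩ := hu _ (swap_res hf hC)
  -- find the component of class (f j) containing x
  obtain ⟨j₀, ⟨h01, h02⟩, _⟩ := hf (f j) x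
  have hj0j : j₀ ≠ j := fun h => hx (h ▸ h02)
  have hj0j' : j₀ ≠ j' := fun h => hne (h ▸ h01).symm
  have e1 : σ (f j₀) = f j₀ := by
    have := congrFun hσ j₀
    simpa [Equiv.swap_apply_of_ne_of_ne hj0j hj0j'] using this.symm
  have e2 : σ (f j) = f j' := by
    have := congrFun hσ j
    simpa using this.symm
  rw [h01] at e1
  exact hne (by rw [← e1, e2])

lemma main_bound {m n N K : ℕ} (hK : 2 ≤ K) (hm : 1 ≤ m)
    (C : Fin N → Finset (Fin m)) (hU : UniquelyResolvable n C) :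
    N ≤ (K - 1) * n +
      (Finset.univ.filter (fun A : Finset (Fin m) => A.Nonempty ∧ K * A.card ≤ m)).card := by
  obtain ⟨hne, f, hf, hu⟩ := hU
  classical
  set Large : Finset (Fin N) := Finset.univ.filter (fun j => m < K * (C j).card) with hLarge
  set Small : Finset (Fin N) := Finset.univ.filter (fun j => K * (C j).card ≤ m) with hSmall
  have hsplit : Small.card + Large.card = N := by
    have := Finset.card_filter_add_card_filter_not
      (s := (Finset.univ : Finset (Fin N))) (fun j => K * (C j).card ≤ m)
    simp only [not_le] at this
    simpa using this
  -- Large bound : each class contains at most K-1 large components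
  have hLbound : Large.card ≤ (K - 1) * n := by
    have hfib : Large.card = ∑ i ∈ Finset.univ, (Large.filter (fun j => f j = i)).card :=
      Finset.card_eq_sum_card_fiberwise (fun j _ => Finset.mem_univ (f j))
    rw [hfib]
    have : ∀ i : Fin n, (Large.filter (fun j => f j = i)).card ≤ K - 1 := by
      intro i
      by_contra hcon
      push_neg at hcon
      have hcard : K ≤ (Large.filter (fun j => f j = i)).card := by omega
      set T := Large.filter (fun j => f j = i) with hT
      have hdisj : ∀ j ∈ T, ∀ j' ∈ T, j ≠ j' → Disjoint (C j) (C j') := by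
        intro j hj j' hj' hne'
        rw [Finset.disjoint_left]
        intro x hx hx'
        simp only [hT, Finset.mem_filter] at hj hj'
        exact hne' (same_class_eq hf (hj.2.trans hj'.2.symm) hx hx')
      have hsum : ∑ j ∈ T, (C j).card ≤ m := by
        rw [← Finset.card_biUnion hdisj]
        simpa using Finset.card_le_card (Finset.subset_univ (T.biUnion C))
      have hlow : ∀ j ∈ T, m + 1 ≤ K * (C j).card := by
        intro j hj
        simp only [hT, hLarge, Finset.mem_filter, Finset.mem_univ, true_and] at hj
        omega
      have : T.card * (m + 1) ≤ K * m := by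
        calc T.card * (m + 1) = ∑ _j ∈ T, (m+1) := by rw [Finset.sum_const, smul_eq_mul]
        _ ≤ ∑ j ∈ T, K * (C j).card := Finset.sum_le_sum hlow
        _ = K * ∑ j ∈ T, (C j).card := by rw [Finset.mul_sum]
        _ ≤ K * m := Nat.mul_le_mul_left K hsum
      nlinarith [hcard, this]
    calc ∑ i ∈ Finset.univ, (Large.filter (fun j => f j = i)).card
        ≤ ∑ _i ∈ (Finset.univ : Finset (Fin n)), (K - 1) := Finset.sum_le_sum (fun i _ => this i)
      _ = (K - 1) * n := by simp [mul_comm]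
  -- Small bound : C is injective on Small
  have hSbound : Small.card ≤
      (Finset.univ.filter (fun A : Finset (Fin m) => A.Nonempty ∧ K * A.card ≤ m)).card := by
    apply Finset.card_le_card_of_injOn C
    · intro j hj
      simp only [hSmall, Finset.mem_coe, Finset.mem_filter] at hj
      simp only [Finset.mem_coe, Finset.mem_filter, Finset.mem_univ, true_and]
      exact ⟨hne j, hj.2⟩
    · intro j hj j' hj' hCe
      simp only [hSmall, Finset.coe_filter, Set.mem_setOf_eq] at hj hj'
      by_contra hne'
      rcases eq_or_ne (f j) (f j') with hfe | hfe
      · -- same class, equal nonempty components: contradiction with disjointness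
        obtain ⟨x, hx⟩ := hne j
        exact hne' (same_class_eq hf hfe hx (hCe ▸ hx))
      · -- C j is not all of univ
        have hcard : (C j).card < m := by
          have h1 : 1 ≤ (C j).card := Finset.card_pos.mpr (hne j)
          have := hj.2
          nlinarith
        have : ∃ x, x ∉ C j := by
          by_contra hall
          push_neg at hall
          have : (Finset.univ : Finset (Fin m)) ⊆ C j := fun x _ => hall x
          have := Finset.card_le_card this
          simp at this
          omega
        obtain ⟨x, hx⟩ := this
        exact absurd (cross_class hf hu hCe hfe hx) (by simp)
  omega


lemma Scard_le_sum {m K : ℕ} (hK : 1 ≤ K) :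
    (Finset.univ.filter (fun A : Finset (Fin m) => A.Nonempty ∧ K * A.card ≤ m)).card
      ≤ ∑ r ∈ Finset.Icc 1 (m / K), m.choose r := by
  classical
  have hsub : (Finset.univ.filter (fun A : Finset (Fin m) => A.Nonempty ∧ K * A.card ≤ m))
      ⊆ (Finset.Icc 1 (m / K)).biUnion (fun r => Finset.powersetCard r Finset.univ) := by
    intro A hA
    simp only [Finset.mem_filter, Finset.mem_univ, true_and] at hA
    rw [Finset.mem_biUnion]
    refine ⟨A.card, ?_, ?_⟩
    · rw [Finset.mem_Icc]
      exact ⟨Finset.card_pos.mpr hA.1, (Nat.le_div_iff_mul_le hK).mpr (by linarith [hA.2])⟩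
    · rw [Finset.mem_powersetCard]
      exact ⟨Finset.subset_univ A, rfl⟩
  calc _ ≤ ((Finset.Icc 1 (m / K)).biUnion (fun r => Finset.powersetCard r Finset.univ)).card :=
        Finset.card_le_card hsub
    _ ≤ ∑ r ∈ Finset.Icc 1 (m / K), (Finset.powersetCard r (Finset.univ : Finset (Fin m))).card :=
        Finset.card_biUnion_le
    _ = ∑ r ∈ Finset.Icc 1 (m / K), m.choose r := by
        apply Finset.sum_congr rfl
        intro r _
        rw [Finset.card_powersetCard, Finset.card_univ, Fintype.card_fin]

lemma geo_sum {m K : ℕ} (hK : 6 ≤ K) :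
    ∀ M, 1 ≤ M → K * M ≤ m → 4 * ∑ r ∈ Finset.Icc 1 M, m.choose r ≤ 5 * m.choose M := by
  intro M
  induction M with
  | zero => omega
  | succ M ih =>
    intro _ hKM
    rcases Nat.eq_zero_or_pos M with rfl | hM1
    · simp; omega
    have hIH := ih hM1 (le_trans (by nlinarith) hKM)
    have hstep : 5 * m.choose M ≤ m.choose (M + 1) := by
      have hid := Nat.choose_succ_right_eq m M
      have hm6 : 6 * (M + 1) ≤ m := by nlinarith
      have hsub : 5 * (M + 1) ≤ m - M := by omega
      have : m.choose (M+1) * (M+1) ≥ m.choose M * (5 * (M+1)) := by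
        rw [hid]
        exact Nat.mul_le_mul_left _ hsub
      nlinarith
    rw [Finset.sum_Icc_succ_top (by omega : 1 ≤ M + 1)]
    omega


lemma phi_mono {x y z : ℝ} (hx : 0 < x) (hxy : x ≤ y) (hyz : y ≤ z) :
    x * (1 + Real.log z - Real.log x) ≤ y * (1 + Real.log z - Real.log y) := by
  have hy : 0 < y := lt_of_lt_of_le hx hxy
  have l1 : Real.log y - Real.log x ≤ y / x - 1 := by
    have := Real.log_le_sub_one_of_pos (show (0:ℝ) < y / x by positivity)
    rwa [Real.log_div (ne_of_gt hy) (ne_of_gt hx)] at this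
  have l2 : Real.log y ≤ Real.log z := Real.log_le_log hy hyz
  have h1 : x * (Real.log y - Real.log x) ≤ y - x := by
    have := mul_le_mul_of_nonneg_left l1 (le_of_lt hx)
    calc x * (Real.log y - Real.log x) ≤ x * (y / x - 1) := this
      _ = y - x := by field_simp
  nlinarith [mul_nonneg (sub_nonneg.mpr hxy) (sub_nonneg.mpr l2)]

lemma choose_bound {m K : ℕ} (hK : 6 ≤ K) (hKm : K ≤ m) :
    (m.choose (m / K) : ℝ) ≤ Real.exp (((m : ℝ) / K) * (1 + Real.log K)) := by
  set M := m / K with hM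
  have hM1 : 1 ≤ M := (Nat.one_le_div_iff (by omega)).mpr hKm
  have hMpos : (0:ℝ) < M := by exact_mod_cast hM1
  have hmpos : (0:ℝ) < m := by
    have : 6 ≤ m := le_trans hK hKm
    exact_mod_cast Nat.lt_of_lt_of_le (by norm_num) this
  have hKpos : (0:ℝ) < K := by exact_mod_cast Nat.lt_of_lt_of_le (by norm_num) hK
  -- step 1 : choose ≤ m^M / M!
  have h1 : (m.choose M : ℝ) ≤ (m:ℝ) ^ M / (M.factorial : ℝ) := by
    have := Nat.choose_le_pow_div (α := ℝ) M m
    simpa using this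
  -- step 2 : M^M / M! ≤ exp M
  have h2 : (M:ℝ) ^ M / (M.factorial : ℝ) ≤ Real.exp M := by
    have := Real.sum_le_exp_of_nonneg (le_of_lt hMpos) (M + 1)
    calc (M:ℝ) ^ M / (M.factorial : ℝ)
        ≤ ∑ i ∈ Finset.range (M + 1), (M:ℝ) ^ i / (i.factorial : ℝ) :=
          Finset.single_le_sum (f := fun i => (M:ℝ) ^ i / (i.factorial : ℝ))
            (fun i _ => by positivity) (Finset.self_mem_range_succ M)
      _ ≤ Real.exp M := this
  -- step 3 : m^M / M! = (m/M)^M * (M^M / M!)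
  have h3 : (m:ℝ) ^ M / (M.factorial : ℝ)
      = ((m:ℝ)/M) ^ M * ((M:ℝ) ^ M / (M.factorial : ℝ)) := by
    rw [div_pow]
    field_simp
  -- step 4 : combine: choose ≤ (m/M)^M * exp M = exp (M * (1 + log(m) - log M))
  have hmM : (0:ℝ) < (m:ℝ)/M := by positivity
  have h4 : (m.choose M : ℝ) ≤ Real.exp ((M:ℝ) * (1 + Real.log m - Real.log M)) := by
    have hpow : ((m:ℝ)/M) ^ M = Real.exp ((M:ℝ) * Real.log ((m:ℝ)/M)) := by
      rw [← Real.exp_log (x := ((m:ℝ)/M) ^ M) (by positivity), Real.log_pow]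
    have : (m.choose M : ℝ) ≤ ((m:ℝ)/M) ^ M * Real.exp M := by
      calc (m.choose M : ℝ) ≤ (m:ℝ) ^ M / (M.factorial : ℝ) := h1
        _ = ((m:ℝ)/M) ^ M * ((M:ℝ) ^ M / (M.factorial : ℝ)) := h3
        _ ≤ ((m:ℝ)/M) ^ M * Real.exp M := by
            apply mul_le_mul_of_nonneg_left h2 (by positivity)
    calc (m.choose M : ℝ) ≤ ((m:ℝ)/M) ^ M * Real.exp M := this
      _ = Real.exp ((M:ℝ) * Real.log ((m:ℝ)/M) + M) := by rw [hpow, ← Real.exp_add]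
      _ = Real.exp ((M:ℝ) * (1 + Real.log m - Real.log M)) := by
          rw [Real.log_div (ne_of_gt hmpos) (ne_of_gt hMpos)]; ring_nf
  -- step 5 : monotonicity
  have h5 : (M:ℝ) * (1 + Real.log m - Real.log M)
      ≤ ((m:ℝ)/K) * (1 + Real.log K) := by
    have hxy : (M:ℝ) ≤ (m:ℝ)/K := by
      rw [le_div_iff₀ hKpos]
      exact_mod_cast Nat.div_mul_le_self m K
    have hyz : (m:ℝ)/K ≤ (m:ℝ) := by
      rw [div_le_iff₀ hKpos]
      have h1K : (1:ℝ) ≤ K := by exact_mod_cast (by omega : 1 ≤ K)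
      nlinarith
    have := phi_mono hMpos hxy hyz
    have hlog : Real.log ((m:ℝ)/K) = Real.log m - Real.log K :=
      Real.log_div (ne_of_gt hmpos) (ne_of_gt hKpos)
    calc (M:ℝ) * (1 + Real.log m - Real.log M)
        ≤ ((m:ℝ)/K) * (1 + Real.log m - Real.log ((m:ℝ)/K)) := this
      _ = ((m:ℝ)/K) * (1 + Real.log K) := by rw [hlog]; ring
  exact le_trans h4 (Real.exp_le_exp.mpr h5)


lemma numeric {c : ℝ} (hc0 : 0 < c) (hc1 : c < 1) :
    Real.log (5/4) + 1 + Real.log (⌊(6 - 3.2 * Real.logb 2 c)/c⌋₊ : ℝ)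
      ≤ c * (⌊(6 - 3.2 * Real.logb 2 c)/c⌋₊ : ℝ) * Real.log 2 := by
  have hLl : (0.6931471803:ℝ) < Real.log 2 := Real.log_two_gt_d9
  have hLu : Real.log 2 < 0.6931471808 := Real.log_two_lt_d9
  set L := Real.log 2 with hLdef
  have hLpos : 0 < L := by linarith
  have hu : 0 < -Real.log c := by
    have := Real.log_neg hc0 hc1
    linarith
  set u := -Real.log c with hudef
  set B := 3.2 * u / L with hBdef
  have hBpos : 0 < B := by positivity
  have hBL : B * L = 3.2 * u := by
    rw [hBdef, div_mul_cancel₀ _ (ne_of_gt hLpos)]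
  have hBle : B ≤ 4.62 * u := by
    rw [hBdef, div_le_iff₀ hLpos]
    nlinarith [mul_lt_mul_of_pos_left hLl hu]
  have hA : (6 - 3.2 * Real.logb 2 c) = 6 + B := by
    rw [Real.logb, hBdef]
    field_simp
    ring
  set R := (6 - 3.2 * Real.logb 2 c)/c with hRdef
  have hApos : (0:ℝ) < 6 + B := by linarith
  have hR : R = (6 + B)/c := by rw [hRdef, hA]
  have hR6 : (6:ℝ) ≤ R := by
    rw [hR]
    rw [le_div_iff₀ hc0]
    nlinarith [hBpos]
  have hRpos : (0:ℝ) < R := by linarith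
  set K := ⌊R⌋₊ with hKdef
  have hK6 : 6 ≤ K := Nat.le_floor (by exact_mod_cast hR6)
  have hKR : (K:ℝ) ≤ R := Nat.floor_le (le_of_lt hRpos)
  have hRK : R < K + 1 := Nat.lt_floor_add_one R
  have hKpos : (0:ℝ) < K := by
    have : (6:ℝ) ≤ K := by exact_mod_cast hK6
    linarith
  -- c * K ≥ A - c
  have hcK : (6 + B) - c ≤ c * K := by
    have : c * (R - 1) ≤ c * K := by
      apply mul_le_mul_of_nonneg_left _ (le_of_lt hc0)
      linarith
    have hcR : c * R = 6 + B := by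
      rw [hR]; field_simp
    have hexp : c * (R - 1) = c * R - c := by ring
    linarith
  -- log K ≤ log A + u
  have hlogK : Real.log K ≤ Real.log (6 + B) + u := by
    have h1 : Real.log K ≤ Real.log R := Real.log_le_log hKpos hKR
    have h2 : Real.log R = Real.log (6 + B) - Real.log c := by
      rw [hR, Real.log_div (ne_of_gt hApos) (ne_of_gt hc0)]
    rw [h2] at h1
    linarith
  -- log(6+B) ≤ log 6 + B/6
  have hlogA : Real.log (6 + B) ≤ Real.log 6 + B/6 := by
    have h1 : Real.log ((6 + B)/6) ≤ (6 + B)/6 - 1 :=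
      Real.log_le_sub_one_of_pos (by positivity)
    have h2 : Real.log ((6 + B)/6) = Real.log (6 + B) - Real.log 6 :=
      Real.log_div (ne_of_gt hApos) (by norm_num)
    rw [h2] at h1
    linarith
  -- log 6 ≤ 2L + 1/2
  have hlog6 : Real.log 6 ≤ 2 * L + 1/2 := by
    have h1 : Real.log 6 = Real.log 4 + Real.log 1.5 := by
      rw [← Real.log_mul (by norm_num) (by norm_num)]
      norm_num
    have h2 : Real.log 4 = 2 * L := by
      rw [hLdef, show (4:ℝ) = 2^2 by norm_num, Real.log_pow]
      norm_num
    have h3 : Real.log 1.5 ≤ 0.5 := by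
      have := Real.log_le_sub_one_of_pos (show (0:ℝ) < 1.5 by norm_num)
      linarith
    linarith
  -- log(5/4) ≤ 1/4
  have hlog54 : Real.log (5/4) ≤ 1/4 := by
    have := Real.log_le_sub_one_of_pos (show (0:ℝ) < 5/4 by norm_num)
    linarith
  -- assemble
  have hrhs : 5 * L + 3.2 * u ≤ c * K * L := by
    have h1 : (5 + B) * L ≤ c * K * L := by
      apply mul_le_mul_of_nonneg_right _ (le_of_lt hLpos)
      linarith
    have hexp : (5 + B) * L = 5 * L + B * L := by ring
    linarith
  have hlhs : Real.log (5/4) + 1 + Real.log K ≤ 1.75 + 2*L + u + B/6 := by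
    linarith
  linarith


theorem stmt18 (m n : ℕ) (c : ℝ) (hc0 : 0 < c) (hc1 : c < 1)
    (hnc : (n : ℝ) = 2 ^ (c * (m : ℝ))) (hn1 : 1 ≤ n) (hn2 : n ≤ 2 ^ (m - 1) - 1) :
    (g n m : ℝ) ≤ ((n : ℝ) / c) * (6 - 3.2 * Real.logb 2 c) := by
  classical
  -- basic facts
  have hm2 : 2 ≤ m := by
    by_contra h
    push_neg at h
    interval_cases m <;> simp_all
  have hm1 : 1 ≤ m := by omega
  set R := (6 - 3.2 * Real.logb 2 c) / c with hRdef
  set K := ⌊R⌋₊ with hKdef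
  have hlogb : Real.logb 2 c < 0 := Real.logb_neg (by norm_num) hc0 hc1
  have hA6 : (6:ℝ) ≤ 6 - 3.2 * Real.logb 2 c := by nlinarith
  have hR6 : (6:ℝ) ≤ R := by
    rw [hRdef, le_div_iff₀ hc0]
    nlinarith
  have hRpos : (0:ℝ) < R := by linarith
  have hK6 : 6 ≤ K := Nat.le_floor (by exact_mod_cast hR6)
  have hKR : (K:ℝ) ≤ R := Nat.floor_le (le_of_lt hRpos)
  have hKpos : (0:ℝ) < K := by exact_mod_cast (by omega : 0 < K)
  have hL : (0:ℝ) < Real.log 2 := Real.log_pos (by norm_num)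
  -- the small-component count is at most n
  set Scard := (Finset.univ.filter
      (fun A : Finset (Fin m) => A.Nonempty ∧ K * A.card ≤ m)).card with hScdef
  have hSn : Scard ≤ n := by
    rcases le_or_gt K m with hKm | hKm
    · -- main case
      set M := m / K with hMdef
      have hM1 : 1 ≤ M := (Nat.one_le_div_iff (by omega)).mpr hKm
      have hKM : K * M ≤ m := by rw [hMdef]; exact Nat.mul_div_le m K
      have hgeo := geo_sum hK6 M hM1 hKM
      have hsum := Scard_le_sum (m := m) (K := K) (by omega)
      -- real chain
      have hch := choose_bound hK6 hKm
      have hnum := numeric hc0 hc1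
      rw [← hKdef] at hnum
      have hmK1 : (1:ℝ) ≤ (m:ℝ) / K := by
        rw [le_div_iff₀ hKpos]
        simpa using (by exact_mod_cast hKm : (K:ℝ) ≤ m)
      have hexp : Real.log (5/4) + ((m:ℝ)/K) * (1 + Real.log K) ≤ c * m * Real.log 2 := by
        have hD0 : (0:ℝ) ≤ Real.log (5/4) := Real.log_nonneg (by norm_num)
        have h1 : Real.log (5/4) + ((m:ℝ)/K) * (1 + Real.log K)
            ≤ ((m:ℝ)/K) * (Real.log (5/4) + 1 + Real.log K) := by
          have := mul_le_mul_of_nonneg_right (le_of_lt (lt_of_lt_of_le one_pos hmK1))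
            hD0
          nlinarith [mul_le_mul_of_nonneg_left hD0 (by linarith : (0:ℝ) ≤ (m:ℝ)/K - 1)]
        have h2 : ((m:ℝ)/K) * (Real.log (5/4) + 1 + Real.log K)
            ≤ ((m:ℝ)/K) * (c * K * Real.log 2) :=
          mul_le_mul_of_nonneg_left hnum (by positivity)
        have h3 : ((m:ℝ)/K) * (c * K * Real.log 2) = c * m * Real.log 2 := by
          field_simp
        linarith
      have hreal : (Scard : ℝ) ≤ (n : ℝ) := by
        have c1 : (Scard : ℝ) ≤ (∑ r ∈ Finset.Icc 1 M, m.choose r : ℕ) := by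
          exact_mod_cast hsum
        have c2 : ((∑ r ∈ Finset.Icc 1 M, m.choose r : ℕ) : ℝ) ≤ (5/4) * (m.choose M : ℝ) := by
          have : ((4 * ∑ r ∈ Finset.Icc 1 M, m.choose r : ℕ) : ℝ)
              ≤ ((5 * m.choose M : ℕ) : ℝ) := by exact_mod_cast hgeo
          push_cast at this ⊢
          linarith
        have c3 : (5/4 : ℝ) * (m.choose M : ℝ)
            ≤ (5/4) * Real.exp (((m:ℝ)/K) * (1 + Real.log K)) := by
          apply mul_le_mul_of_nonneg_left _ (by norm_num)
          rw [hMdef]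
          exact hch
        have c4 : (5/4 : ℝ) * Real.exp (((m:ℝ)/K) * (1 + Real.log K))
            ≤ Real.exp (c * m * Real.log 2) := by
          have e1 : (5/4 : ℝ) = Real.exp (Real.log (5/4)) := (Real.exp_log (by norm_num)).symm
          rw [e1, ← Real.exp_add]
          exact Real.exp_le_exp.mpr hexp
        have c5 : Real.exp (c * m * Real.log 2) = (n : ℝ) := by
          rw [hnc, Real.rpow_def_of_pos (by norm_num : (0:ℝ) < 2)]
          ring_nf
        calc (Scard : ℝ) ≤ _ := c1
          _ ≤ _ := c2
          _ ≤ _ := c3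
          _ ≤ _ := c4
          _ = _ := c5
      exact_mod_cast hreal
    · -- K > m : no small components at all
      have : Scard = 0 := by
        rw [hScdef, Finset.card_eq_zero, Finset.filter_eq_empty_iff]
        intro A _
        rintro ⟨hAne, hAcard⟩
        have h1 : 1 ≤ A.card := Finset.card_pos.mpr hAne
        nlinarith
      omega
  -- each uniquely resolvable family has size at most K * n
  have hub : ∀ N ∈ {k | ∃ C : Fin k → Finset (Fin m), UniquelyResolvable n C}, N ≤ K * n := by
    rintro N ⟨C, hU⟩
    have := main_bound (by omega : 2 ≤ K) hm1 C hU
    have hKn : (K - 1) * n + n = K * n := by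
      have hKs : K - 1 + 1 = K := by omega
      calc (K - 1) * n + n = (K - 1 + 1) * n := by ring
        _ = K * n := by rw [hKs]
    omega
  have hg : g n m ≤ K * n := csSup_le' hub
  -- conclude
  have hcast : (g n m : ℝ) ≤ (K : ℝ) * n := by
    calc (g n m : ℝ) ≤ ((K * n : ℕ) : ℝ) := by exact_mod_cast hg
      _ = (K : ℝ) * n := by push_cast; ring
  have hfin : (K : ℝ) * n ≤ R * n := by
    apply mul_le_mul_of_nonneg_right hKR (by positivity)
  calc (g n m : ℝ) ≤ (K : ℝ) * n := hcast
    _ ≤ R * n := hfin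
    _ = ((n : ℝ) / c) * (6 - 3.2 * Real.logb 2 c) := by
      rw [hRdef]
      field_simp
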